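/- For every ε > 0 and every uncountable closed set P ⊆ ℝⁿ (n ≥ 1), there is a perfect set T ⊆ P which is ε-directed. -/

import Mathlib

open Metric Set

variable {E : Type*} [NormedAddCommGroup E] [NormedSpace ℝ E]

/-- The cone of nonzero vectors whose normalization is within `ε` of `v` or `-v`. -/
def InCone (v : E) (ε : ℝ) (u : E) : Prop :=
  u ≠ 0 ∧ (‖‖u‖⁻¹ • u - v‖ < ε ∨ ‖‖u‖⁻¹ • u + v‖ < ε)

def ConeFree (v : E) (ε : ℝ) (A : Set E) : Prop :=
  ∀ x ∈ A, ∀ y ∈ A, x ≠ y → ¬ InCone v ε (x - y)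

def SigmaFree (v : E) (ε : ℝ) (A : Set E) : Prop :=
  ∃ S : Set (Set E), S.Countable ∧ (∀ F ∈ S, ConeFree v ε F) ∧ A ⊆ ⋃₀ S

lemma norm_normalize (u : E) (hu : u ≠ 0) : ‖‖u‖⁻¹ • u‖ = 1 := by
  rw [norm_smul, norm_inv, norm_norm, inv_mul_cancel₀ (norm_ne_zero_iff.2 hu)]

lemma normalize_est (u w : E) (hu : u ≠ 0) (hw : w ≠ 0) :
    ‖‖u‖⁻¹ • u - ‖w‖⁻¹ • w‖ ≤ 2 * ‖u - w‖ / ‖w‖ := by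
  have hwn : (0:ℝ) < ‖w‖ := norm_pos_iff.2 hw
  have hun : (0:ℝ) < ‖u‖ := norm_pos_iff.2 hu
  have key : ‖u‖⁻¹ • u - ‖w‖⁻¹ • w = ‖w‖⁻¹ • (u - w) + (‖u‖⁻¹ - ‖w‖⁻¹) • u := by
    module
  have h1 : ‖‖w‖⁻¹ • (u - w)‖ = ‖u - w‖ / ‖w‖ := by
    rw [norm_smul, norm_inv, norm_norm]; ring
  have h2 : ‖(‖u‖⁻¹ - ‖w‖⁻¹) • u‖ ≤ ‖u - w‖ / ‖w‖ := by
    rw [norm_smul, Real.norm_eq_abs]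
    have e1 : |‖u‖⁻¹ - ‖w‖⁻¹| * ‖u‖ = |‖w‖ - ‖u‖| / ‖w‖ := by
      rw [inv_sub_inv (ne_of_gt hun) (ne_of_gt hwn), abs_div, abs_mul, abs_of_pos hun,
        abs_of_pos hwn]
      field_simp
    rw [e1]
    have := abs_norm_sub_norm_le w u
    rw [show w - u = -(u-w) by abel, norm_neg] at this
    exact div_le_div_of_nonneg_right this hwn.le |>.trans_eq rfl
  calc ‖‖u‖⁻¹ • u - ‖w‖⁻¹ • w‖ ≤ ‖‖w‖⁻¹ • (u - w)‖ + ‖(‖u‖⁻¹ - ‖w‖⁻¹) • u‖ := by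
        rw [key]; exact norm_add_le _ _
    _ ≤ ‖u - w‖ / ‖w‖ + ‖u - w‖ / ‖w‖ := by rw [h1]; linarith
    _ = 2 * ‖u - w‖ / ‖w‖ := by ring

lemma inCone_neg {v : E} {ε : ℝ} {u : E} (h : InCone v ε u) : InCone v ε (-u) := by
  obtain ⟨h0, h1⟩ := h
  refine ⟨neg_ne_zero.2 h0, ?_⟩
  have : ‖-u‖⁻¹ • (-u) = -(‖u‖⁻¹ • u) := by rw [norm_neg, smul_neg]
  rw [this]
  rcases h1 with h1 | h1
  · right
    rw [show -(‖u‖⁻¹ • u) + v = -(‖u‖⁻¹ • u - v) by abel, norm_neg]; exact h1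
  · left
    rw [show -(‖u‖⁻¹ • u) - v = -(‖u‖⁻¹ • u + v) by abel, norm_neg]; exact h1

lemma isOpen_inCone (v : E) (ε : ℝ) : IsOpen {u : E | InCone v ε u} := by
  have hset : {u : E | InCone v ε u} =
      {u : E | u ≠ 0} ∩ (fun u : E => ‖u‖⁻¹ • u) ⁻¹' (ball v ε ∪ ball (-v) ε) := by
    ext u
    simp only [InCone, mem_inter_iff, mem_setOf_eq, mem_preimage, mem_union, mem_ball,
      dist_eq_norm, sub_neg_eq_add]
  rw [hset]
  have hcont : ContinuousOn (fun u : E => ‖u‖⁻¹ • u) {u : E | u ≠ 0} :=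
    (continuous_norm.continuousOn.inv₀ (fun x hx => norm_ne_zero_iff.2 hx)).smul
      continuousOn_id
  exact hcont.isOpen_inter_preimage isOpen_ne ((isOpen_ball).union (isOpen_ball))

lemma coneFree_mono {v : E} {ε : ℝ} {A B : Set E} (hAB : A ⊆ B) (h : ConeFree v ε B) :
    ConeFree v ε A := fun x hx y hy hxy => h x (hAB hx) y (hAB hy) hxy

lemma coneFree_closure {v : E} {ε : ℝ} {A : Set E} (h : ConeFree v ε A) :
    ConeFree v ε (closure A) := by
  intro x hx y hy hxy hin
  -- InCone is open, so some neighborhood of (x, y) still has difference in the cone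
  have hopen : IsOpen {p : E × E | InCone v ε (p.1 - p.2)} :=
    (isOpen_inCone v ε).preimage (continuous_fst.sub continuous_snd)
  have hd : 0 < dist x y := dist_pos.2 hxy
  obtain ⟨δ, hδpos, hδ⟩ := Metric.isOpen_iff.1 hopen (x, y) hin
  set δ' := min δ (dist x y) with hδ'
  have hδ'pos : 0 < δ' := lt_min hδpos hd
  obtain ⟨x', hx'A, hx'd⟩ := Metric.mem_closure_iff.1 hx (δ'/2) (by positivity)
  obtain ⟨y', hy'A, hy'd⟩ := Metric.mem_closure_iff.1 hy (δ'/2) (by positivity)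
  have hxy' : x' ≠ y' := by
    intro hEq
    subst hEq
    have := dist_triangle x x' y
    rw [dist_comm x' y] at this
    have : dist x y < δ' := by linarith
    exact absurd this (not_lt.2 (min_le_right _ _))
  have hmem : (x', y') ∈ ball (x, y) δ := by
    rw [mem_ball, Prod.dist_eq]
    exact max_lt (lt_of_lt_of_le (by rw [dist_comm]; linarith [min_le_left δ (dist x y)])
      le_rfl) (lt_of_lt_of_le (by rw [dist_comm]; linarith [min_le_left δ (dist x y)]) le_rfl)
  exact h x' hx'A y' hy'A hxy' (hδ hmem)

lemma sigmaFree_mono {v : E} {ε : ℝ} {A B : Set E} (hAB : A ⊆ B) (h : SigmaFree v ε B) :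
    SigmaFree v ε A := by
  obtain ⟨S, hS1, hS2, hS3⟩ := h
  exact ⟨S, hS1, hS2, hAB.trans hS3⟩

open TopologicalSpace in
lemma dichotomy [SecondCountableTopology E] (v : E) (ε : ℝ)
    (Q : Set E) (hQc : IsClosed Q) (hQunc : ¬ Q.Countable) :
    (∃ Z, Z ⊆ Q ∧ IsClosed Z ∧ Z.Nonempty ∧
      (∀ x ∈ Z, ∀ δ : ℝ, 0 < δ → ∃ y z, y ∈ Z ∧ z ∈ Z ∧ dist y x < δ ∧ dist z x < δ ∧
        y ≠ z ∧ InCone v ε (y - z))) ∨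
    (∃ Q', Q' ⊆ Q ∧ IsClosed Q' ∧ ¬ Q'.Countable ∧ ConeFree v ε Q') := by
  classical
  set 𝒰 : Set (Set E) := {b ∈ countableBasis E | SigmaFree v ε (Q ∩ b)} with h𝒰
  set U : Set E := ⋃₀ 𝒰 with hU
  have hUopen : IsOpen U :=
    isOpen_sUnion fun b hb => isOpen_of_mem_countableBasis hb.1
  have hUσ : SigmaFree v ε (Q ∩ U) := by
    have h𝒰c : 𝒰.Countable := (countable_countableBasis E).mono (fun b hb => hb.1)
    choose S hSc hSfree hScov using fun (b : 𝒰) => b.2.2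
    have : Countable ↑𝒰 := h𝒰c.to_subtype
    refine ⟨⋃ b : 𝒰, S b, countable_iUnion (fun b => hSc b), ?_, ?_⟩
    · intro F hF
      obtain ⟨b, hb⟩ := mem_iUnion.1 hF
      exact hSfree b F hb
    · rintro x ⟨hxQ, hxU⟩
      obtain ⟨b, hb𝒰, hxb⟩ := hxU
      obtain ⟨F, hF, hxF⟩ := hScov ⟨b, hb𝒰⟩ ⟨hxQ, hxb⟩
      exact ⟨F, mem_iUnion.2 ⟨⟨b, hb𝒰⟩, hF⟩, hxF⟩
  rcases (Q \ U).eq_empty_or_nonempty with hZ | hZne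
  · -- Q ⊆ U, so Q is sigma-free; extract an uncountable free piece
    right
    have hQU : Q ⊆ U := by rwa [diff_eq_empty] at hZ
    have hQσ : SigmaFree v ε Q := sigmaFree_mono (subset_inter Subset.rfl hQU) hUσ
    obtain ⟨S, hSc, hSfree, hScov⟩ := hQσ
    have : ∃ F ∈ S, ¬ (Q ∩ F).Countable := by
      by_contra hall
      push_neg at hall
      apply hQunc
      have : Q ⊆ ⋃ F ∈ S, Q ∩ F := by
        intro x hx
        obtain ⟨F, hF, hxF⟩ := hScov hx
        exact mem_biUnion hF ⟨hx, hxF⟩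
      exact (hSc.biUnion hall).mono this
    obtain ⟨F, hFS, hFunc⟩ := this
    refine ⟨closure (Q ∩ F), ?_, isClosed_closure, ?_, ?_⟩
    · exact (closure_mono inter_subset_left).trans hQc.closure_subset
    · exact fun h => hFunc (h.mono subset_closure)
    · exact coneFree_closure (coneFree_mono inter_subset_right (hSfree F hFS))
  · left
    refine ⟨Q \ U, diff_subset, hQc.sdiff hUopen, hZne, ?_⟩
    intro x hx δ hδ
    by_contra hno
    push_neg at hno
    -- Then Z ∩ ball x δ is cone-free
    have hfree : ConeFree v ε ((Q \ U) ∩ ball x δ) := by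
      rintro a ⟨haZ, hab⟩ b ⟨hbZ, hbb⟩ hab' hin
      exact (hno a b haZ hbZ (mem_ball.1 hab) (mem_ball.1 hbb) hab') hin
    have hσ : SigmaFree v ε (Q ∩ ball x δ) := by
      obtain ⟨S, hSc, hSfree, hScov⟩ := hUσ
      refine ⟨insert ((Q \ U) ∩ ball x δ) S, hSc.insert _, ?_, ?_⟩
      · rintro F (rfl | hF)
        · exact hfree
        · exact hSfree F hF
      · rintro y ⟨hyQ, hyb⟩
        by_cases hyU : y ∈ U
        · obtain ⟨F, hF, hyF⟩ := hScov ⟨hyQ, hyU⟩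
          exact ⟨F, Or.inr hF, hyF⟩
        · exact ⟨_, Or.inl rfl, ⟨hyQ, hyU⟩, hyb⟩
    obtain ⟨b, hbB, hxb, hbsub⟩ := (isBasis_countableBasis E).exists_subset_of_mem_open
      (mem_ball_self hδ) isOpen_ball
    have hb𝒰 : b ∈ 𝒰 := ⟨hbB, sigmaFree_mono (inter_subset_inter_right Q hbsub) hσ⟩
    exact hx.2 ⟨b, hb𝒰, hxb⟩

/-- The Cantor scheme: each node of the binary tree carries a (center, radius) pair. -/
noncomputable def cantorG (x0 : E) (y z : E → ℝ → E) (ε : ℝ) : List Bool → E × ℝ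
  | [] => (x0, 1)
  | b :: s =>
    (if b then y (cantorG x0 y z ε s).1 ((cantorG x0 y z ε s).2 / 4)
      else z (cantorG x0 y z ε s).1 ((cantorG x0 y z ε s).2 / 4),
      min (ε * dist (y (cantorG x0 y z ε s).1 ((cantorG x0 y z ε s).2 / 4))
          (z (cantorG x0 y z ε s).1 ((cantorG x0 y z ε s).2 / 4)) / 8)
        (min (dist (y (cantorG x0 y z ε s).1 ((cantorG x0 y z ε s).2 / 4))
          (z (cantorG x0 y z ε s).1 ((cantorG x0 y z ε s).2 / 4)) / 3)
          ((cantorG x0 y z ε s).2 / 4)))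

lemma pairProp_neg {v : E} {ε : ℝ} {u : E}
    (h : u ≠ 0 ∧ (‖‖u‖⁻¹ • u - v‖ ≤ ε ∨ ‖‖u‖⁻¹ • u + v‖ ≤ ε)) :
    (-u) ≠ 0 ∧ (‖‖-u‖⁻¹ • (-u) - v‖ ≤ ε ∨ ‖‖-u‖⁻¹ • (-u) + v‖ ≤ ε) := by
  obtain ⟨h0, h1⟩ := h
  refine ⟨neg_ne_zero.2 h0, ?_⟩
  have hrw : ‖-u‖⁻¹ • (-u) = -(‖u‖⁻¹ • u) := by rw [norm_neg, smul_neg]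
  rw [hrw]
  rcases h1 with h1 | h1
  · right
    rw [show -(‖u‖⁻¹ • u) + v = -(‖u‖⁻¹ • u - v) by abel, norm_neg]; exact h1
  · left
    rw [show -(‖u‖⁻¹ • u) - v = -(‖u‖⁻¹ • u + v) by abel, norm_neg]; exact h1


lemma pair_spec {v : E} {ε : ℝ} (hε : 0 < ε) {A C : E} (hAC : A ≠ C)
    (hcone : InCone v (ε/2) (A - C)) {r' : ℝ}
    (hr'1 : r' ≤ ε * dist A C / 8) (hr'2 : r' ≤ dist A C / 3) :
    Disjoint (closedBall A r') (closedBall C r') ∧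
    ∀ p ∈ closedBall A r', ∀ p' ∈ closedBall C r',
      (p - p') ≠ 0 ∧ (‖‖p - p'‖⁻¹ • (p - p') - v‖ ≤ ε ∨ ‖‖p - p'‖⁻¹ • (p - p') + v‖ ≤ ε) := by
  have hd : 0 < dist A C := dist_pos.2 hAC
  constructor
  · exact closedBall_disjoint_closedBall (by linarith)
  · intro p hp p' hp'
    have hpA : ‖p - A‖ ≤ r' := by rw [← dist_eq_norm]; exact mem_closedBall.1 hp
    have hpC : ‖p' - C‖ ≤ r' := by rw [← dist_eq_norm]; exact mem_closedBall.1 hp'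
    have hw : ‖A - C‖ = dist A C := (dist_eq_norm A C).symm
    have hw0 : A - C ≠ 0 := hcone.1
    have huw : ‖(p - p') - (A - C)‖ ≤ 2 * r' := by
      have : (p - p') - (A - C) = (p - A) - (p' - C) := by abel
      rw [this]
      calc ‖(p - A) - (p' - C)‖ ≤ ‖p - A‖ + ‖p' - C‖ := norm_sub_le _ _
        _ ≤ 2 * r' := by linarith
    have hu0 : p - p' ≠ 0 := by
      have h1 : ‖A - C‖ - ‖p - p'‖ ≤ ‖(A - C) - (p - p')‖ := norm_sub_norm_le _ _
      have h2 : ‖(A - C) - (p - p')‖ = ‖(p - p') - (A - C)‖ := norm_sub_rev _ _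
      have : 0 < ‖p - p'‖ := by rw [h2] at h1; rw [hw] at h1; linarith
      exact norm_pos_iff.1 this
    have hest : ‖‖p - p'‖⁻¹ • (p - p') - ‖A - C‖⁻¹ • (A - C)‖ ≤ ε/2 := by
      calc ‖‖p - p'‖⁻¹ • (p - p') - ‖A - C‖⁻¹ • (A - C)‖
          ≤ 2 * ‖(p - p') - (A - C)‖ / ‖A - C‖ := normalize_est _ _ hu0 hw0
        _ ≤ (ε * dist A C / 2) / dist A C := by
            rw [hw]
            apply div_le_div_of_nonneg_right ?_ hd.le |>.trans_eq rfl
            linarith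
        _ = ε / 2 := by field_simp
    refine ⟨hu0, ?_⟩
    rcases hcone.2 with hc | hc
    · left
      calc ‖‖p - p'‖⁻¹ • (p - p') - v‖
          = ‖(‖p - p'‖⁻¹ • (p - p') - ‖A - C‖⁻¹ • (A - C)) + (‖A - C‖⁻¹ • (A - C) - v)‖ := by
            congr 1; abel
        _ ≤ ‖‖p - p'‖⁻¹ • (p - p') - ‖A - C‖⁻¹ • (A - C)‖ + ‖‖A - C‖⁻¹ • (A - C) - v‖ :=
            norm_add_le _ _
        _ ≤ ε := by linarith
    · right
      calc ‖‖p - p'‖⁻¹ • (p - p') + v‖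
          = ‖(‖p - p'‖⁻¹ • (p - p') - ‖A - C‖⁻¹ • (A - C)) + (‖A - C‖⁻¹ • (A - C) + v)‖ := by
            congr 1; abel
        _ ≤ ‖‖p - p'‖⁻¹ • (p - p') - ‖A - C‖⁻¹ • (A - C)‖ + ‖‖A - C‖⁻¹ • (A - C) + v‖ :=
            norm_add_le _ _
        _ ≤ ε := by linarith

lemma cantor [CompleteSpace E] (v : E) (ε : ℝ) (hε : 0 < ε) (Z : Set E) (hZc : IsClosed Z)
    (hZne : Z.Nonempty)
    (hsplit : ∀ x ∈ Z, ∀ δ : ℝ, 0 < δ → ∃ y z, y ∈ Z ∧ z ∈ Z ∧ dist y x < δ ∧ dist z x < δ ∧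
      y ≠ z ∧ InCone v (ε/2) (y - z)) :
    ∃ T, T ⊆ Z ∧ Perfect T ∧ T.Nonempty ∧
      ∀ x ∈ T, ∀ y ∈ T, x ≠ y →
        ‖‖x - y‖⁻¹ • (x - y) - v‖ ≤ ε ∨ ‖‖x - y‖⁻¹ • (x - y) + v‖ ≤ ε := by
  classical
  obtain ⟨x₀, hx₀⟩ := hZne
  choose! y z hyZ hzZ hyd hzd hyz hcone using hsplit
  set g : List Bool → E × ℝ := cantorG x₀ y z ε with hg
  have g_cons : ∀ (b : Bool) (s : List Bool), g (b :: s) =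
      (if b then y (g s).1 ((g s).2 / 4) else z (g s).1 ((g s).2 / 4),
        min (ε * dist (y (g s).1 ((g s).2 / 4)) (z (g s).1 ((g s).2 / 4)) / 8)
          (min (dist (y (g s).1 ((g s).2 / 4)) (z (g s).1 ((g s).2 / 4)) / 3)
            ((g s).2 / 4))) := by
    intro b s
    rw [hg, cantorG]
  have inv : ∀ s : List Bool, (g s).1 ∈ Z ∧ 0 < (g s).2 ∧ (g s).2 ≤ (1/2 : ℝ) ^ s.length := by
    intro s
    induction s with
    | nil =>
      have : g [] = (x₀, 1) := by rw [hg, cantorG]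
      rw [this]
      exact ⟨hx₀, one_pos, by norm_num⟩
    | cons b s ih =>
      obtain ⟨h1, h2, h3⟩ := ih
      have hq4 : (0:ℝ) < (g s).2 / 4 := by positivity
      have hd : 0 < dist (y (g s).1 ((g s).2 / 4)) (z (g s).1 ((g s).2 / 4)) :=
        dist_pos.2 (hyz _ h1 _ hq4)
      rw [g_cons]
      refine ⟨?_, ?_, ?_⟩
      · cases b
        · simpa using hzZ _ h1 _ hq4
        · simpa using hyZ _ h1 _ hq4
      · exact lt_min (by positivity) (lt_min (by positivity) hq4)
      · simp only [List.length_cons]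
        have h4 : (0:ℝ) ≤ (1/2 : ℝ) ^ s.length := by positivity
        refine le_trans ((min_le_right _ _).trans (min_le_right _ _)) ?_
        rw [pow_succ]
        linarith
  -- sibling analysis at each node
  have sib : ∀ s : List Bool,
      (∀ b, closedBall (g (b :: s)).1 (g (b :: s)).2 ⊆ closedBall (g s).1 (g s).2) ∧
      Disjoint (closedBall (g (true :: s)).1 (g (true :: s)).2)
        (closedBall (g (false :: s)).1 (g (false :: s)).2) ∧
      (∀ p ∈ closedBall (g (true :: s)).1 (g (true :: s)).2,
        ∀ p' ∈ closedBall (g (false :: s)).1 (g (false :: s)).2,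
        (p - p') ≠ 0 ∧ (‖‖p - p'‖⁻¹ • (p - p') - v‖ ≤ ε ∨ ‖‖p - p'‖⁻¹ • (p - p') + v‖ ≤ ε)) := by
    intro s
    obtain ⟨h1, h2, h3⟩ := inv s
    have hq4 : (0:ℝ) < (g s).2 / 4 := by positivity
    set A := y (g s).1 ((g s).2 / 4) with hA
    set C := z (g s).1 ((g s).2 / 4) with hC
    have hAC : A ≠ C := hyz _ h1 _ hq4
    have hconeAC : InCone v (ε/2) (A - C) := hcone _ h1 _ hq4
    have hAd : dist A (g s).1 < (g s).2 / 4 := hyd _ h1 _ hq4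
    have hCd : dist C (g s).1 < (g s).2 / 4 := hzd _ h1 _ hq4
    set r' := min (ε * dist A C / 8) (min (dist A C / 3) ((g s).2 / 4)) with hr'
    have hgc : ∀ b, g (b :: s) = (if b then A else C, r') := fun b => g_cons b s
    have hgt : g (true :: s) = (A, r') := by rw [hgc]; simp
    have hgf : g (false :: s) = (C, r') := by rw [hgc]; simp
    have hr'1 : r' ≤ ε * dist A C / 8 := min_le_left _ _
    have hr'2 : r' ≤ dist A C / 3 := (min_le_right _ _).trans (min_le_left _ _)
    have hr'3 : r' ≤ (g s).2 / 4 := (min_le_right _ _).trans (min_le_right _ _)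
    obtain ⟨hdisj, hpair⟩ := pair_spec hε hAC hconeAC hr'1 hr'2
    refine ⟨?_, ?_, ?_⟩
    · intro b
      have hsub : ∀ Ctr : E, dist Ctr (g s).1 < (g s).2 / 4 →
          closedBall Ctr r' ⊆ closedBall (g s).1 (g s).2 := fun Ctr hCtr =>
        closedBall_subset_closedBall' (by linarith)
      cases b
      · rw [hgf]; exact hsub C hCd
      · rw [hgt]; exact hsub A hAd
    · rw [hgt, hgf]
      exact hdisj
    · intro p hp p' hp'
      rw [hgt] at hp
      rw [hgf] at hp'
      exact hpair p hp p' hp'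
  -- branches
  set F : (ℕ → Bool) → ℕ → List Bool := fun σ k => (List.ofFn fun i : Fin k => σ i).reverse
    with hF
  have hFs : ∀ (σ : ℕ → Bool) (k : ℕ), F σ (k + 1) = σ k :: F σ k := by
    intro σ k
    rw [hF]
    simp only
    rw [List.ofFn_succ', List.concat_eq_append, List.reverse_concat]
    simp
  have hFlen : ∀ (σ : ℕ → Bool) (k : ℕ), (F σ k).length = k := by
    intro σ k; rw [hF]; simp
  have hFeq : ∀ (σ τ : ℕ → Bool) (k : ℕ), (∀ i < k, σ i = τ i) → F σ k = F τ k := by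
    intro σ τ k h
    show (List.ofFn fun i : Fin k => σ i).reverse = (List.ofFn fun i : Fin k => τ i).reverse
    have heq : (fun i : Fin k => σ i) = (fun i : Fin k => τ i) := funext fun i => h i i.2
    rw [heq]
  have nest : ∀ (σ : ℕ → Bool) (k m : ℕ), k ≤ m →
      closedBall (g (F σ m)).1 (g (F σ m)).2 ⊆ closedBall (g (F σ k)).1 (g (F σ k)).2 := by
    intro σ k m hkm
    induction m with
    | zero => rw [Nat.le_zero.1 hkm]
    | succ m ih =>
      rcases Nat.lt_or_ge k (m + 1) with h | h
      · have hk : k ≤ m := Nat.lt_succ_iff.1 h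
        refine subset_trans ?_ (ih hk)
        rw [hFs σ m]
        exact (sib (F σ m)).1 (σ m)
      · rw [Nat.le_antisymm hkm h]
  have memball : ∀ (σ : ℕ → Bool) (k m : ℕ), k ≤ m →
      (g (F σ m)).1 ∈ closedBall (g (F σ k)).1 (g (F σ k)).2 := fun σ k m h =>
    nest σ k m h (mem_closedBall_self (inv _).2.1.le)
  have hcau : ∀ σ : ℕ → Bool, CauchySeq (fun k => (g (F σ k)).1) := by
    intro σ
    apply cauchySeq_of_le_geometric (1/2 : ℝ) 2 (by norm_num)
    intro k
    have h1 := memball σ k (k + 1) (Nat.le_succ k)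
    rw [mem_closedBall] at h1
    have h2 : (g (F σ k)).2 ≤ (1/2 : ℝ) ^ k := by
      have := (inv (F σ k)).2.2
      rwa [hFlen σ k] at this
    rw [dist_comm]
    have : (0:ℝ) ≤ (1/2 : ℝ) ^ k := by positivity
    calc dist (g (F σ (k+1))).1 (g (F σ k)).1 ≤ (g (F σ k)).2 := h1
      _ ≤ (1/2 : ℝ) ^ k := h2
      _ ≤ 2 * (1/2 : ℝ) ^ k := by linarith
  choose f hf using fun σ => cauchySeq_tendsto_of_complete (hcau σ)
  have hfb : ∀ (σ : ℕ → Bool) (k : ℕ), f σ ∈ closedBall (g (F σ k)).1 (g (F σ k)).2 :=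
    fun σ k => isClosed_closedBall.mem_of_tendsto (hf σ)
      (Filter.eventually_atTop.2 ⟨k, fun m hm => memball σ k m hm⟩)
  have hfZ : ∀ σ, f σ ∈ Z := fun σ =>
    hZc.mem_of_tendsto (hf σ) (Filter.Eventually.of_forall fun k => (inv _).1)
  have key : ∀ σ τ : ℕ → Bool, σ ≠ τ → (f σ - f τ) ≠ 0 ∧
      (‖‖f σ - f τ‖⁻¹ • (f σ - f τ) - v‖ ≤ ε ∨ ‖‖f σ - f τ‖⁻¹ • (f σ - f τ) + v‖ ≤ ε) := by
    intro σ τ hne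
    have hex : ∃ m, σ m ≠ τ m := by
      by_contra h
      push_neg at h
      exact hne (funext h)
    set k := Nat.find hex with hk
    have hkp : σ k ≠ τ k := Nat.find_spec hex
    have hagree : ∀ i < k, σ i = τ i := fun i hi => not_not.1 (Nat.find_min hex hi)
    have hFk : F σ k = F τ k := hFeq σ τ k hagree
    have h1 : f σ ∈ closedBall (g (σ k :: F σ k)).1 (g (σ k :: F σ k)).2 := by
      rw [← hFs]; exact hfb σ (k + 1)
    have h2 : f τ ∈ closedBall (g (τ k :: F σ k)).1 (g (τ k :: F σ k)).2 := by
      rw [hFk, ← hFs]; exact hfb τ (k + 1)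
    cases hb : σ k with
    | true =>
      have hτ : τ k = false := by
        cases hbt : τ k
        · rfl
        · exact absurd (hb.trans hbt.symm) hkp
      rw [hb] at h1
      rw [hτ] at h2
      exact (sib (F σ k)).2.2 (f σ) h1 (f τ) h2
    | false =>
      have hτ : τ k = true := by
        cases hbt : τ k
        · exact absurd (hb.trans hbt.symm) hkp
        · rfl
      rw [hb] at h1
      rw [hτ] at h2
      have := pairProp_neg ((sib (F σ k)).2.2 (f τ) h2 (f σ) h1)
      rwa [neg_sub] at this
  have hinj : Function.Injective f := by
    intro σ τ h
    by_contra hne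
    exact (key σ τ hne).1 (by rw [h, sub_self])
  -- distance bound from agreement
  have hdistb : ∀ (σ τ : ℕ → Bool) (k : ℕ), (∀ i < k, τ i = σ i) →
      dist (f τ) (f σ) ≤ 2 * (1/2 : ℝ) ^ k := by
    intro σ τ k hagr
    have hFk : F τ k = F σ k := hFeq τ σ k hagr
    have b1 := hfb τ k
    rw [hFk] at b1
    have b2 := hfb σ k
    rw [mem_closedBall] at b1 b2
    have h2 : (g (F σ k)).2 ≤ (1/2 : ℝ) ^ k := by
      have := (inv (F σ k)).2.2
      rwa [hFlen σ k] at this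
    calc dist (f τ) (f σ) ≤ dist (f τ) (g (F σ k)).1 + dist (g (F σ k)).1 (f σ) :=
        dist_triangle _ _ _
      _ ≤ (g (F σ k)).2 + (g (F σ k)).2 := by
          rw [dist_comm (g (F σ k)).1 (f σ)]; exact add_le_add b1 b2
      _ ≤ 2 * (1/2 : ℝ) ^ k := by linarith
  have hcont : Continuous f := by
    rw [continuous_iff_continuousAt]
    intro σ
    rw [ContinuousAt, Metric.tendsto_nhds]
    intro e he
    obtain ⟨k, hk⟩ : ∃ k : ℕ, 2 * (1/2 : ℝ) ^ k < e := by
      obtain ⟨k, hk⟩ := exists_pow_lt_of_lt_one (show (0:ℝ) < e/2 by linarith)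
        (show (1/2 : ℝ) < 1 by norm_num)
      exact ⟨k, by linarith⟩
    have hev : ∀ᶠ τ : ℕ → Bool in nhds σ, ∀ i : Fin k, τ i = σ i := by
      rw [Filter.eventually_all]
      intro i
      have hopen : IsOpen ((fun τ : ℕ → Bool => τ (i : ℕ)) ⁻¹' {σ (i : ℕ)}) :=
        (isOpen_discrete _).preimage (continuous_apply (i : ℕ))
      exact Filter.eventually_iff.2 (hopen.mem_nhds rfl)
    refine hev.mono fun τ hτ => ?_
    exact lt_of_le_of_lt (hdistb σ τ k fun i hi => hτ ⟨i, hi⟩) hk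
  refine ⟨Set.range f, ?_, ⟨(isCompact_range hcont).isClosed, ?_⟩, ⟨f (fun _ => false),
    Set.mem_range_self _⟩, ?_⟩
  · rintro x ⟨σ, rfl⟩
    exact hfZ σ
  · rintro x ⟨σ, rfl⟩
    rw [accPt_iff_nhds]
    intro U hU
    obtain ⟨e, he, hball⟩ := Metric.mem_nhds_iff.1 hU
    obtain ⟨k, hk⟩ : ∃ k : ℕ, 2 * (1/2 : ℝ) ^ k < e := by
      obtain ⟨k, hk⟩ := exists_pow_lt_of_lt_one (show (0:ℝ) < e/2 by linarith)
        (show (1/2 : ℝ) < 1 by norm_num)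
      exact ⟨k, by linarith⟩
    set τ := Function.update σ k (!(σ k)) with hτdef
    have hτσ : τ ≠ σ := by
      intro h
      have := congrFun h k
      rw [hτdef, Function.update_self] at this
      exact Bool.not_ne_self (σ k) this
    have hagr : ∀ i < k, τ i = σ i := fun i hi =>
      Function.update_of_ne (Nat.ne_of_lt hi) _ _
    refine ⟨f τ, ⟨hball ?_, Set.mem_range_self _⟩, hinj.ne hτσ⟩
    rw [mem_ball]
    exact lt_of_le_of_lt (hdistb σ τ k hagr) hk
  · rintro x ⟨σ, rfl⟩ y' ⟨τ, rfl⟩ hxy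
    exact (key σ τ fun h => hxy (by rw [h])).2

theorem stmt_9 (n : ℕ) (hn : 1 ≤ n) (ε : ℝ) (hε : 0 < ε)
    (P : Set (EuclideanSpace ℝ (Fin n))) (hPclosed : IsClosed P)
    (hPunc : ¬ P.Countable) :
    ∃ T ⊆ P, Perfect T ∧ T.Nonempty ∧
      ∃ v : EuclideanSpace ℝ (Fin n), ‖v‖ = 1 ∧
        ∀ x ∈ T, ∀ y ∈ T, x ≠ y →
          ‖‖x - y‖⁻¹ • (x - y) - v‖ ≤ ε ∨ ‖‖x - y‖⁻¹ • (x - y) + v‖ ≤ ε := by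
  classical
  have hcover : sphere (0 : EuclideanSpace ℝ (Fin n)) 1 ⊆
      ⋃ v ∈ sphere (0 : EuclideanSpace ℝ (Fin n)) 1, ball v (ε/2) := fun u hu =>
    Set.mem_biUnion hu (mem_ball_self (by positivity))
  obtain ⟨V, hVsub, hVfin, hVcov⟩ :=
    (isCompact_sphere (0 : EuclideanSpace ℝ (Fin n)) 1).elim_finite_subcover_image
      (fun v _ => isOpen_ball) hcover
  have main : ∀ (k : ℕ) (W : Finset (EuclideanSpace ℝ (Fin n))), ↑W ⊆ V → W.card ≤ k →
      ∀ Q : Set (EuclideanSpace ℝ (Fin n)), Q ⊆ P → IsClosed Q → ¬ Q.Countable →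
      (∀ v ∈ V, v ∉ W → ConeFree v (ε/2) Q) →
      ∃ T ⊆ P, Perfect T ∧ T.Nonempty ∧
        ∃ v : EuclideanSpace ℝ (Fin n), ‖v‖ = 1 ∧
          ∀ x ∈ T, ∀ y ∈ T, x ≠ y →
            ‖‖x - y‖⁻¹ • (x - y) - v‖ ≤ ε ∨ ‖‖x - y‖⁻¹ • (x - y) + v‖ ≤ ε := by
    intro k
    induction k with
    | zero =>
      intro W hWV hWc Q hQP hQc hQunc hfree
      have hW : W = ∅ := Finset.card_eq_zero.1 (Nat.le_zero.1 hWc)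
      have hpair : ∃ a ∈ Q, ∃ b ∈ Q, a ≠ b := by
        by_contra h
        push_neg at h
        exact hQunc (Set.Subsingleton.countable fun a ha b hb => h a ha b hb)
      obtain ⟨a, ha, b, hb, hab⟩ := hpair
      have hu : a - b ≠ 0 := sub_ne_zero.2 hab
      have hmem : ‖a - b‖⁻¹ • (a - b) ∈ sphere (0 : EuclideanSpace ℝ (Fin n)) 1 := by
        rw [mem_sphere_zero_iff_norm]
        exact norm_normalize _ hu
      obtain ⟨v, hvV, hvball⟩ := Set.mem_iUnion₂.1 (hVcov hmem)
      have hin : InCone v (ε/2) (a - b) := by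
        refine ⟨hu, Or.inl ?_⟩
        rw [← dist_eq_norm]
        exact mem_ball.1 hvball
      exact absurd hin (hfree v hvV (by simp [hW]) a ha b hb hab)
    | succ k ih =>
      intro W hWV hWc Q hQP hQc hQunc hfree
      rcases Finset.eq_empty_or_nonempty W with rfl | ⟨v₀, hv₀⟩
      · exact ih ∅ (by simp) (by simp) Q hQP hQc hQunc
          (fun v hv _ => hfree v hv (Finset.notMem_empty v))
      · have hv₀V : v₀ ∈ V := hWV hv₀
        rcases dichotomy v₀ (ε/2) Q hQc hQunc with
          ⟨Z, hZQ, hZc, hZne, hZsplit⟩ | ⟨Q', hQ'Q, hQ'c, hQ'unc, hQ'free⟩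
        · obtain ⟨T, hTZ, hTperf, hTne, hTpair⟩ := cantor v₀ ε hε Z hZc hZne hZsplit
          exact ⟨T, hTZ.trans (hZQ.trans hQP), hTperf, hTne, v₀,
            mem_sphere_zero_iff_norm.1 (hVsub hv₀V), hTpair⟩
        · refine ih (W.erase v₀) (fun x hx => hWV (Finset.erase_subset _ _ hx)) ?_
            Q' (hQ'Q.trans hQP) hQ'c hQ'unc ?_
          · have := Finset.card_erase_of_mem hv₀
            omega
          · intro v hv hvW'
            by_cases hvv : v = v₀
            · subst hvv
              exact hQ'free
            · have hvW : v ∉ W := fun hmem =>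
                hvW' (Finset.mem_erase.2 ⟨hvv, hmem⟩)
              exact coneFree_mono hQ'Q (hfree v hv hvW)
  exact main hVfin.toFinset.card hVfin.toFinset (by simp) le_rfl P Subset.rfl hPclosed hPunc
    (fun v hv hvF => absurd (hVfin.mem_toFinset.2 hv) hvF)
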